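/- arXiv:2204.05492 — 5 statements merged into one kernel-verified Lean document; each statement's English description precedes it below -/
import Mathlib

section
/- If x, y ∈ ℂ^d satisfy ⟨x, y⟩ ∈ ℝ with ⟨x, y⟩ ≥ 0, then ‖x·x* − y·y*‖_F² ≥ (1/2)·‖x‖₂²·‖x − y‖₂². -/
open MeasureTheory ProbabilityTheory Complex Finset
open scoped Real ComplexInnerProductSpace

noncomputable section

/-- `‖X‖_{ψ₂} ≤ K`: all moments are finite and `(𝔼|X|^p)^{1/p} ≤ √p · K` for `p ≥ 1`. -/
def PsiTwoLe {Ω : Type*} [MeasurableSpace Ω] (μ : Measure Ω) (X : Ω → ℂ) (K : ℝ) : Prop :=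
  ∀ p : ℝ, 1 ≤ p → Integrable (fun ω => ‖X ω‖ ^ p) μ ∧
    (∫ ω, ‖X ω‖ ^ p ∂μ) ^ (1 / p) ≤ Real.sqrt p * K

/-- The standing assumptions on the complex sub-Gaussian variable `ξ = ξ₁ + ξ₂ i`. -/
structure StdSubgaussian {Ω : Type*} [MeasurableSpace Ω] (μ : Measure Ω)
    (ξ : Ω → ℂ) (Cψ γ : ℝ) : Prop where
  meas : Measurable ξ
  psi2 : PsiTwoLe μ ξ Cψ
  mean_zero : ∫ ω, ξ ω ∂μ = 0
  sq_zero : ∫ ω, ξ ω ^ 2 ∂μ = 0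
  absSq_one : ∫ ω, ‖ξ ω‖ ^ 2 ∂μ = 1
  abs4_eq : ∫ ω, ‖ξ ω‖ ^ 4 ∂μ = γ
  indep_re_im : IndepFun (fun ω => (ξ ω).re) (fun ω => (ξ ω).im) μ
  ident_re_im : Measure.map (fun ω => (ξ ω).re) μ = Measure.map (fun ω => (ξ ω).im) μ

/-- The entries of the random measurement vectors `a j` are i.i.d. copies of `ξ`. -/
def IIDEntries {Ω : Type*} [MeasurableSpace Ω] (μ : Measure Ω) {d m : ℕ}
    (a : Fin m → Ω → EuclideanSpace ℂ (Fin d)) (ξ : Ω → ℂ) : Prop :=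
  (∀ (j : Fin m) (l : Fin d), Measurable fun ω => a j ω l) ∧
  iIndepFun (fun (p : Fin m × Fin d) ω => a p.1 ω p.2) μ ∧
  ∀ (j : Fin m) (l : Fin d), Measure.map (fun ω => a j ω l) μ = Measure.map ξ μ

/-- The entries of a single random vector `a` are i.i.d. copies of `ξ`. -/
def IIDEntriesVec {Ω : Type*} [MeasurableSpace Ω] (μ : Measure Ω) {d : ℕ}
    (a : Ω → EuclideanSpace ℂ (Fin d)) (ξ : Ω → ℂ) : Prop :=
  (∀ l : Fin d, Measurable fun ω => a ω l) ∧
  iIndepFun (fun (l : Fin d) ω => a ω l) μ ∧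
  ∀ l : Fin d, Measure.map (fun ω => a ω l) μ = Measure.map ξ μ

/-- Euclidean norm of a real vector. -/
def l2 {m : ℕ} (η : Fin m → ℝ) : ℝ := Real.sqrt (∑ j, η j ^ 2)

/-- The amplitude-based loss `∑ (|⟨a_j, x⟩| − b_j)²`. -/
def ampLoss {d m : ℕ} (a : Fin m → EuclideanSpace ℂ (Fin d)) (b : Fin m → ℝ)
    (x : EuclideanSpace ℂ (Fin d)) : ℝ :=
  ∑ j, (‖⟪a j, x⟫‖ - b j) ^ 2

/-- `xhat` is a (global) minimizer of the amplitude-based model. -/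
def IsAmpMinimizer {d m : ℕ} (a : Fin m → EuclideanSpace ℂ (Fin d)) (b : Fin m → ℝ)
    (xhat : EuclideanSpace ℂ (Fin d)) : Prop :=
  ∀ x, ampLoss a b xhat ≤ ampLoss a b x

/-- `xhat` is a minimizer of the constrained ℓ₁ model with tolerance `ε`. -/
def IsL1Minimizer {d m : ℕ} (a : Fin m → EuclideanSpace ℂ (Fin d)) (b : Fin m → ℝ)
    (ε : ℝ) (xhat : EuclideanSpace ℂ (Fin d)) : Prop :=
  Real.sqrt (ampLoss a b xhat) ≤ ε ∧
  ∀ x, Real.sqrt (ampLoss a b x) ≤ ε →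
    (∑ l, ‖xhat l‖) ≤ ∑ l, ‖x l‖

/-- Frobenius norm of a complex matrix. -/
def frobNorm {d : ℕ} (X : Matrix (Fin d) (Fin d) ℂ) : ℝ :=
  Real.sqrt (∑ i, ∑ j, ‖X i j‖ ^ 2)

/-- The quadratic form `a* X a`. -/
def quadForm {d : ℕ} (a : EuclideanSpace ℂ (Fin d)) (X : Matrix (Fin d) (Fin d) ℂ) : ℂ :=
  dotProduct (fun i => (starRingEnd ℂ) (a i)) (X.mulVec fun i => a i)

/-- The rank-one matrix `x x*`. -/
def outerProd {d : ℕ} (x : EuclideanSpace ℂ (Fin d)) : Matrix (Fin d) (Fin d) ℂ :=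
  Matrix.of fun j l => x j * (starRingEnd ℂ) (x l)

end


private theorem statement6_key {d : ℕ} (z w : Fin d → ℂ) :
    (∑ i, ∑ j, Complex.normSq (z i * (starRingEnd ℂ) (z j) - w i * (starRingEnd ℂ) (w j)))
    = (∑ i, Complex.normSq (z i))^2 + (∑ i, Complex.normSq (w i))^2
      - 2 * Complex.normSq (∑ i, (starRingEnd ℂ) (z i) * w i) := by
  have hc : (∑ i, ∑ j, ((z i * (starRingEnd ℂ) (z j)) * (starRingEnd ℂ) (w i * (starRingEnd ℂ) (w j))))
      = (starRingEnd ℂ) (∑ i, (starRingEnd ℂ) (z i) * w i) * (∑ j, (starRingEnd ℂ) (z j) * w j) := by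
    rw [map_sum, Finset.sum_mul_sum]
    congr 1; ext i; congr 1; ext j
    simp only [map_mul, Complex.conj_conj]; ring
  have h2 := congrArg Complex.re hc
  simp only [Complex.re_sum] at h2
  rw [mul_comm, Complex.mul_conj, Complex.ofReal_re] at h2
  simp only [Complex.normSq_sub, Complex.normSq_mul, Complex.normSq_conj,
    Finset.sum_sub_distrib, Finset.sum_add_distrib, ← Finset.mul_sum, ← Finset.sum_mul]
  rw [h2]; ring

/-- Lemma 2.1: if `⟨x, y⟩` is real and nonnegative, then
`‖x x* − y y*‖_F² ≥ (1/2) ‖x‖² ‖x − y‖²`. -/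
theorem statement6 {d : ℕ} (x y : EuclideanSpace ℂ (Fin d))
    (him : (⟪x, y⟫ : ℂ).im = 0) (hre : 0 ≤ (⟪x, y⟫ : ℂ).re) :
    (1 / 2) * ‖x‖ ^ 2 * ‖x - y‖ ^ 2 ≤ frobNorm (outerProd x - outerProd y) ^ 2 := by
  have hxn : ∀ v : EuclideanSpace ℂ (Fin d), ‖v‖^2 = ∑ i, Complex.normSq (v i) := by
    intro v
    rw [EuclideanSpace.norm_eq, Real.sq_sqrt (by positivity)]
    simp [Complex.sq_norm]
  have htin : (⟪x, y⟫ : ℂ) = ∑ i, (starRingEnd ℂ) (x i) * y i := by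
    simp [PiLp.inner_apply, RCLike.inner_apply, mul_comm]
  have hfr : frobNorm (outerProd x - outerProd y) ^ 2
      = ‖x‖^4 + ‖y‖^4 - 2 * Complex.normSq (⟪x, y⟫ : ℂ) := by
    rw [frobNorm, Real.sq_sqrt (by positivity)]
    have : ∀ i j : Fin d, (outerProd x - outerProd y) i j
        = x i * (starRingEnd ℂ) (x j) - y i * (starRingEnd ℂ) (y j) := by
      intro i j; simp [outerProd, Matrix.sub_apply]
    simp only [this, Complex.sq_norm]
    rw [statement6_key, ← htin, ← hxn x, ← hxn y]
    ring
  have hsub : ‖x - y‖ ^ 2 = ‖x‖ ^ 2 - 2 * (⟪x, y⟫ : ℂ).re + ‖y‖ ^ 2 := by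
    have := @norm_sub_sq ℂ _ _ _ _ x y
    simpa using this
  have hnsq : Complex.normSq (⟪x, y⟫ : ℂ) = (⟪x, y⟫ : ℂ).re ^ 2 := by
    rw [Complex.normSq_apply, him]; ring
  have hcs : (⟪x, y⟫ : ℂ).re ^ 2 ≤ ‖x‖^2 * ‖y‖^2 := by
    have h1 : ‖(⟪x, y⟫ : ℂ)‖ ≤ ‖x‖ * ‖y‖ := by
      simpa using norm_inner_le_norm (𝕜 := ℂ) x y
    have h2 : |(⟪x, y⟫ : ℂ).re| ≤ ‖(⟪x, y⟫ : ℂ)‖ := Complex.abs_re_le_norm _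
    calc (⟪x, y⟫ : ℂ).re ^ 2 = |(⟪x, y⟫ : ℂ).re| ^ 2 := (_root_.sq_abs _).symm
      _ ≤ (‖x‖ * ‖y‖) ^ 2 := by
          apply pow_le_pow_left₀ (abs_nonneg _) (h2.trans h1)
      _ = ‖x‖^2 * ‖y‖^2 := by ring
  have ha : (0:ℝ) ≤ ‖x‖^2 := sq_nonneg _
  have hb : (0:ℝ) ≤ ‖y‖^2 := sq_nonneg _
  rw [hfr, hsub, hnsq]
  nlinarith [sq_nonneg (‖x‖^2 - ‖y‖^2), sq_nonneg (‖x‖^2 - 2*(⟪x, y⟫ : ℂ).re),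
    sq_nonneg (‖y‖^2 - (⟪x, y⟫ : ℂ).re), mul_nonneg ha hre, mul_nonneg hb hre,
    mul_nonneg ha hb, sq_nonneg (‖x‖^2 + ‖y‖^2 - 2*(⟪x, y⟫ : ℂ).re)]
end

section
/- Let a₁,…,a_m ∈ ℂ^d and b = (b₁,…,b_m) ∈ ℝ^m be fixed, and let x̂ ∈ ℂ^d be any (global or local) minimizer of the function x ↦ Σ_{j=1}^m (|⟨a_j, x⟩| − b_j)² on ℂ^d, viewed as a function of the real and imaginary parts of x. Then Σ_{j=1}^m (|⟨a_j, x̂⟩| − b_j)·|⟨a_j, x̂⟩| = 0. -/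
open MeasureTheory ProbabilityTheory Complex Finset
open scoped Real ComplexInnerProductSpace

/-- first-order optimality condition for the amplitude-based loss at any
(local or global) minimizer. -/
theorem statement14 {d m : ℕ} (a : Fin m → EuclideanSpace ℂ (Fin d)) (b : Fin m → ℝ)
    (xhat : EuclideanSpace ℂ (Fin d)) (h : IsLocalMin (ampLoss a b) xhat) :
    ∑ j, (‖⟪a j, xhat⟫‖ - b j) * ‖⟪a j, xhat⟫‖ = 0 := by
  set r : Fin m → ℝ := fun j => ‖⟪a j, xhat⟫‖ with hr
  set g : ℝ → ℝ := fun t => ∑ j, (r j * t - b j) ^ 2 with hg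
  have hφ : Filter.Tendsto (fun t : ℝ => (t : ℂ) • xhat) (nhds 1) (nhds xhat) := by
    have hc : Continuous (fun t : ℝ => (t : ℂ) • xhat) := by continuity
    have := hc.tendsto 1
    simpa using this
  have hcomp : ∀ᶠ t : ℝ in nhds (1 : ℝ),
      ampLoss a b xhat ≤ ampLoss a b ((t : ℂ) • xhat) := hφ.eventually h
  have hpos : ∀ᶠ t in nhds (1 : ℝ), (0 : ℝ) < t :=
    eventually_nhds_iff.2 ⟨Set.Ioi 0, fun t ht => ht, isOpen_Ioi, Set.mem_Ioi.2 one_pos⟩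
  have heq : ∀ᶠ t : ℝ in nhds (1 : ℝ), ampLoss a b ((t : ℂ) • xhat) = g t := by
    filter_upwards [hpos] with t ht
    unfold ampLoss
    refine Finset.sum_congr rfl fun j _ => ?_
    rw [inner_smul_right]
    simp [hr, abs_of_pos ht, mul_comm]
  have hg1 : g 1 = ampLoss a b xhat := by
    unfold ampLoss
    simp [hg, hr]
  have hmin : IsLocalMin g 1 := by
    filter_upwards [hcomp, heq] with t h1 h2
    rw [hg1, ← h2]; exact h1
  have hderiv : HasDerivAt g (∑ j, 2 * (r j * 1 - b j) ^ 1 * (r j * 1)) 1 := by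
    apply HasDerivAt.fun_sum
    intro j _
    have h1 : HasDerivAt (fun t : ℝ => r j * t - b j) (r j * 1) 1 :=
      ((hasDerivAt_id 1).const_mul (r j)).sub_const (b j)
    simpa using h1.fun_pow 2
  have hzero : deriv g 1 = 0 := hmin.deriv_eq_zero
  rw [hderiv.deriv] at hzero
  have : ∑ j, 2 * (r j * 1 - b j) ^ 1 * (r j * 1)
      = 2 * ∑ j, (r j - b j) * r j := by
    rw [Finset.mul_sum]; exact Finset.sum_congr rfl fun j _ => by ring
  rw [this] at hzero
  have := mul_eq_zero.1 hzero
  simpa [hr] using this.resolve_left (by norm_num)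
end

section
/- For any x, y ∈ ℂ^d, ‖x·x* − y·y*‖_F ≥ (√2/4)·(‖x‖₂ + ‖y‖₂)·inf over θ ∈ [0, 2π) of ‖x − exp(iθ)·y‖₂. Equivalently, choosing θ₀ with ⟨x, exp(iθ₀)·y⟩ real and nonnegative, ‖x·x* − y·y*‖_F² ≥ (1/8)·(‖x‖₂ + ‖y‖₂)²·‖x − exp(iθ₀)·y‖₂². -/
open MeasureTheory ProbabilityTheory Complex Finset
open scoped Real ComplexInnerProductSpace

lemma norm_sq_eq_sum' {d : ℕ} (x : EuclideanSpace ℂ (Fin d)) :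
    ‖x‖ ^ 2 = ∑ i, Complex.normSq (x i) := by
  rw [EuclideanSpace.norm_eq, Real.sq_sqrt (by positivity)]
  congr 1; ext i; rw [← Complex.sq_norm]

lemma frob_sq {d : ℕ} (x y : EuclideanSpace ℂ (Fin d)) :
    frobNorm (outerProd x - outerProd y) ^ 2 =
      ‖x‖ ^ 2 * ‖x‖ ^ 2 + ‖y‖ ^ 2 * ‖y‖ ^ 2 - 2 * Complex.normSq (⟪x,y⟫ : ℂ) := by
  have h1 : frobNorm (outerProd x - outerProd y) ^ 2 =
      ∑ i, ∑ j, Complex.normSq (x i * (starRingEnd ℂ) (x j) - y i * (starRingEnd ℂ) (y j)) := by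
    rw [frobNorm, Real.sq_sqrt (Finset.sum_nonneg fun i _ => Finset.sum_nonneg fun j _ => sq_nonneg _)]
    refine Finset.sum_congr rfl fun i _ => Finset.sum_congr rfl fun j _ => ?_
    rw [Complex.sq_norm]
    congr 1
  rw [h1]
  have h2 : ∀ i j : Fin d,
      Complex.normSq (x i * (starRingEnd ℂ) (x j) - y i * (starRingEnd ℂ) (y j)) =
        Complex.normSq (x i) * Complex.normSq (x j) + Complex.normSq (y i) * Complex.normSq (y j)
          - 2 * ((x i * (starRingEnd ℂ) (y i)) * ((starRingEnd ℂ) (x j) * y j)).re := by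
    intro i j
    rw [Complex.normSq_sub]
    simp only [Complex.normSq_mul, Complex.normSq_conj]
    have e : x i * (starRingEnd ℂ) (x j) * (starRingEnd ℂ) (y i * (starRingEnd ℂ) (y j))
        = x i * (starRingEnd ℂ) (y i) * ((starRingEnd ℂ) (x j) * y j) := by
      rw [map_mul, Complex.conj_conj]; ring
    rw [e]
  simp only [h2, Finset.sum_sub_distrib, Finset.sum_add_distrib, ← Finset.sum_mul,
    ← Finset.mul_sum]
  rw [norm_sq_eq_sum', norm_sq_eq_sum']
  congr 1
  have h3 : (∑ i, ∑ j, ((x i * (starRingEnd ℂ) (y i)) * ((starRingEnd ℂ) (x j) * y j))).re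
      = ((∑ i, x i * (starRingEnd ℂ) (y i)) * (∑ j, (starRingEnd ℂ) (x j) * y j)).re := by
    rw [Finset.sum_mul_sum]
  have h4 : (⟪x,y⟫ : ℂ) = ∑ j, (starRingEnd ℂ) (x j) * y j := by
    simp [PiLp.inner_apply, RCLike.inner_apply, mul_comm]
  have h5 : (∑ i, x i * (starRingEnd ℂ) (y i)) = (starRingEnd ℂ) (⟪x,y⟫ : ℂ) := by
    rw [h4, map_sum]
    exact Finset.sum_congr rfl fun i _ => by rw [map_mul, Complex.conj_conj]
  have h6 : ∑ i, ∑ j, ((x i * (starRingEnd ℂ) (y i)) * ((starRingEnd ℂ) (x j) * y j)).re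
      = (∑ i, ∑ j, ((x i * (starRingEnd ℂ) (y i)) * ((starRingEnd ℂ) (x j) * y j))).re := by
    simp [Complex.re_sum]
  rw [h6, h3, h5, ← h4, ← Complex.normSq_eq_conj_mul_self, Complex.ofReal_re]


lemma statement15_part2 {d : ℕ} (x y : EuclideanSpace ℂ (Fin d)) (θ₀ : ℝ)
    (him : (⟪x, Complex.exp (θ₀ * Complex.I) • y⟫ : ℂ).im = 0)
    (hre : 0 ≤ (⟪x, Complex.exp (θ₀ * Complex.I) • y⟫ : ℂ).re) :
    (1 / 8) * (‖x‖ + ‖y‖) ^ 2 * ‖x - Complex.exp (θ₀ * Complex.I) • y‖ ^ 2 ≤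
      frobNorm (outerProd x - outerProd y) ^ 2 := by
  set e := Complex.exp (θ₀ * Complex.I) with he
  set t := (⟪x, e • y⟫ : ℂ).re with htdef
  have habs1 : ‖e‖ = 1 := Complex.norm_exp_ofReal_mul_I θ₀
  have hval : (⟪x, e • y⟫ : ℂ) = (t : ℂ) :=
    Complex.ext (by rw [Complex.ofReal_re]) (by rw [Complex.ofReal_im]; exact him)
  have htnorm : t ^ 2 = Complex.normSq (⟪x, y⟫ : ℂ) := by
    have h1 : Complex.normSq (⟪x, e • y⟫ : ℂ) = t ^ 2 := by
      rw [hval, Complex.normSq_ofReal]; ring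
    rw [← h1, inner_smul_right, Complex.normSq_mul, Complex.normSq_eq_norm_sq, habs1]
    norm_num
  have htab : t ≤ ‖x‖ * ‖y‖ := by
    calc t ≤ ‖(⟪x, e • y⟫ : ℂ)‖ := by
          rw [hval, Complex.norm_real, Real.norm_eq_abs]; exact le_abs_self t
    _ = ‖(⟪x, e • y⟫ : ℂ)‖ := rfl
    _ ≤ ‖x‖ * ‖e • y‖ := norm_inner_le_norm x (e • y)
    _ = ‖x‖ * ‖y‖ := by rw [norm_smul, habs1, one_mul]
  have hey : ‖e • y‖ = ‖y‖ := by rw [norm_smul, habs1, one_mul]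
  have hns : ‖x - e • y‖ ^ 2 = ‖x‖ ^ 2 + ‖y‖ ^ 2 - 2 * t := by
    have h := @norm_sub_sq ℂ _ _ _ _ x (e • y)
    simp only [RCLike.re_to_complex] at h
    rw [h, hey, ← htdef]; ring
  rw [frob_sq, hns, ← htnorm]
  nlinarith [norm_nonneg x, norm_nonneg y, hre, htab, sq_nonneg (‖x‖ - ‖y‖),
    sq_nonneg (‖x‖ + ‖y‖), sq_nonneg (‖x‖ * ‖y‖ - t), sq_nonneg (‖x‖ ^ 2 - ‖y‖ ^ 2),
    mul_nonneg hre (sub_nonneg.mpr htab),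
    mul_nonneg (mul_nonneg (norm_nonneg x) (norm_nonneg y)) (mul_nonneg hre (sub_nonneg.mpr htab)),
    mul_nonneg (sub_nonneg.mpr htab) (sq_nonneg (‖x‖ - ‖y‖)),
    mul_nonneg hre (sq_nonneg (‖x‖ - ‖y‖)), mul_nonneg hre (sq_nonneg (‖x‖ + ‖y‖))]

/-- `‖x x* − y y*‖_F ≥ (√2/4)(‖x‖+‖y‖) · inf_θ ‖x − e^{iθ} y‖`, and the
equivalent squared form for an optimally aligned phase `θ₀`. -/
theorem statement15 {d : ℕ} (x y : EuclideanSpace ℂ (Fin d)) :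
    (Real.sqrt 2 / 4) * (‖x‖ + ‖y‖) *
        (⨅ θ : Set.Ico (0:ℝ) (2 * π), ‖x - Complex.exp ((θ:ℝ) * Complex.I) • y‖) ≤
      frobNorm (outerProd x - outerProd y) ∧
    ∀ θ₀ : ℝ,
      (⟪x, Complex.exp (θ₀ * Complex.I) • y⟫ : ℂ).im = 0 →
      0 ≤ (⟪x, Complex.exp (θ₀ * Complex.I) • y⟫ : ℂ).re →
      (1 / 8) * (‖x‖ + ‖y‖) ^ 2 * ‖x - Complex.exp (θ₀ * Complex.I) • y‖ ^ 2 ≤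
        frobNorm (outerProd x - outerProd y) ^ 2 := by
  constructor
  · -- part 1
    set c := (⟪x, y⟫ : ℂ) with hc
    set θ' := if 0 < c.arg then 2 * π - c.arg else -c.arg with hθ'
    have hπ : (0:ℝ) < π := Real.pi_pos
    have h1 := Complex.arg_le_pi c
    have h2 := Complex.neg_pi_lt_arg c
    have hθmem : θ' ∈ Set.Ico (0:ℝ) (2 * π) := by
      rw [hθ']; split_ifs with h <;> constructor <;> [linarith; linarith; linarith; linarith]
    have hexp : Complex.exp ((θ' : ℝ) * Complex.I) = Complex.exp ((-c.arg : ℝ) * Complex.I) := by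
      rw [hθ']; split_ifs with h
      · have : ((2 * π - c.arg : ℝ) : ℂ) * Complex.I =
            2 * π * Complex.I + ((-c.arg : ℝ) : ℂ) * Complex.I := by push_cast; ring
        rw [this, Complex.exp_add, Complex.exp_two_pi_mul_I, one_mul]
      · norm_num
    have hval : Complex.exp ((θ' : ℝ) * Complex.I) * c = (‖c‖ : ℂ) := by
      rw [hexp]
      calc Complex.exp ((-c.arg : ℝ) * Complex.I) * c
          = Complex.exp ((-c.arg : ℝ) * Complex.I) *
            ((‖c‖ : ℂ) * Complex.exp ((c.arg : ℝ) * Complex.I)) := by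
            rw [Complex.norm_mul_exp_arg_mul_I c]
        _ = (‖c‖ : ℂ) *
            (Complex.exp ((-c.arg : ℝ) * Complex.I) * Complex.exp ((c.arg : ℝ) * Complex.I)) := by
            ring
        _ = (‖c‖ : ℂ) := by
            rw [← Complex.exp_add]
            have : ((-c.arg : ℝ) : ℂ) * Complex.I + (c.arg : ℝ) * Complex.I = 0 := by
              push_cast; ring
            rw [this, Complex.exp_zero, mul_one]
    have hinner : (⟪x, Complex.exp ((θ' : ℝ) * Complex.I) • y⟫ : ℂ) = (‖c‖ : ℂ) := by
      rw [inner_smul_right, ← hc, hval]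
    have him : (⟪x, Complex.exp ((θ' : ℝ) * Complex.I) • y⟫ : ℂ).im = 0 := by
      rw [hinner]; simp
    have hre : 0 ≤ (⟪x, Complex.exp ((θ' : ℝ) * Complex.I) • y⟫ : ℂ).re := by
      rw [hinner]; simp [norm_nonneg]
    have key := statement15_part2 x y θ' him hre
    haveI : Nonempty (Set.Ico (0:ℝ) (2 * π)) := ⟨⟨0, le_refl 0, by positivity⟩⟩
    set S := ⨅ θ : Set.Ico (0:ℝ) (2 * π), ‖x - Complex.exp ((θ:ℝ) * Complex.I) • y‖ with hS
    have hS0 : 0 ≤ S := le_ciInf fun θ => norm_nonneg _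
    have hSle : S ≤ ‖x - Complex.exp ((θ' : ℝ) * Complex.I) • y‖ := by
      exact ciInf_le ⟨0, by rintro r ⟨θ, rfl⟩; exact norm_nonneg _⟩ (⟨θ', hθmem⟩ : Set.Ico (0:ℝ) (2*π))
    have hF : 0 ≤ frobNorm (outerProd x - outerProd y) := Real.sqrt_nonneg _
    have hL0 : 0 ≤ Real.sqrt 2 / 4 * (‖x‖ + ‖y‖) * S := by positivity
    have h2' : (Real.sqrt 2) ^ 2 = 2 := Real.sq_sqrt (by norm_num)
    have hSsq : S ^ 2 ≤ ‖x - Complex.exp ((θ' : ℝ) * Complex.I) • y‖ ^ 2 :=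
      pow_le_pow_left₀ hS0 hSle 2
    have hsq : (Real.sqrt 2 / 4 * (‖x‖ + ‖y‖) * S) ^ 2 ≤
        frobNorm (outerProd x - outerProd y) ^ 2 := by
      have e1 : (Real.sqrt 2 / 4 * (‖x‖ + ‖y‖) * S) ^ 2 =
          (1 / 8) * (‖x‖ + ‖y‖) ^ 2 * S ^ 2 := by
        rw [mul_pow, mul_pow, div_pow, h2']; ring
      rw [e1]
      calc (1 / 8) * (‖x‖ + ‖y‖) ^ 2 * S ^ 2
          ≤ (1 / 8) * (‖x‖ + ‖y‖) ^ 2 * ‖x - Complex.exp ((θ' : ℝ) * Complex.I) • y‖ ^ 2 := by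
            apply mul_le_mul_of_nonneg_left hSsq; positivity
        _ ≤ _ := key
    exact (pow_le_pow_iff_left₀ hL0 hF (by norm_num)).mp hsq
  · exact fun θ₀ him hre => statement15_part2 x y θ₀ him hre
end

section
/- Let a = (a₁,…,a_d) ∈ ℂ^d be a random vector whose entries are i.i.d. copies of a complex random variable ξ with E ξ = 0, E ξ² = 0, E|ξ|² = 1 and E|ξ|⁴ = γ. Then for every Hermitian matrix X ∈ ℂ^{d×d}, E|a*Xa|² = ‖X‖_F² + (Σ_{i=1}^d X_{ii})² + (γ − 2)·Σ_{i=1}^d |X_{ii}|². In particular, if γ > 1 then E|a*Xa|² ≥ min{1, γ − 1}·‖X‖_F². -/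
open MeasureTheory ProbabilityTheory Complex Finset
open scoped Real ComplexInnerProductSpace

section Aux
variable {Ω : Type*} [MeasurableSpace Ω] {μ : Measure Ω} [IsProbabilityMeasure μ]

lemma aux_integral_mul_indep {U V : Ω → ℂ} (h : IndepFun U V μ)
    (hU : AEMeasurable U μ) (hV : AEMeasurable V μ) :
    ∫ ω, U ω * V ω ∂μ = (∫ ω, U ω ∂μ) * ∫ ω, V ω ∂μ := by
  have hmap := (indepFun_iff_map_prod_eq_prod_map_map hU hV).mp h
  have h1 : IsProbabilityMeasure (μ.map U) := Measure.isProbabilityMeasure_map hU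
  have h2 : IsProbabilityMeasure (μ.map V) := Measure.isProbabilityMeasure_map hV
  have e1 : ∫ ω, U ω * V ω ∂μ = ∫ p : ℂ × ℂ, p.1 * p.2 ∂(μ.map fun ω => (U ω, V ω)) := by
    exact (integral_map (hU.prodMk hV) ((measurable_fst.mul measurable_snd).aestronglyMeasurable :
      AEStronglyMeasurable (fun p : ℂ × ℂ => p.1 * p.2) _)).symm
  rw [e1, hmap, integral_prod_mul (fun z : ℂ => z) (fun z : ℂ => z),
    show (∫ x : ℂ, x ∂(μ.map U)) = ∫ ω, U ω ∂μ from
      integral_map hU (measurable_id.aestronglyMeasurable : AEStronglyMeasurable (fun z : ℂ => z) (μ.map U)),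
    show (∫ x : ℂ, x ∂(μ.map V)) = ∫ ω, V ω ∂μ from
      integral_map hV (measurable_id.aestronglyMeasurable : AEStronglyMeasurable (fun z : ℂ => z) (μ.map V))]

lemma aux_indep_prod {d : ℕ} {h : Fin d → Ω → ℂ}
    (hind : iIndepFun h μ) (hmeas : ∀ k, Measurable (h k))
    (hint : ∀ k, Integrable (h k) μ) (s : Finset (Fin d)) :
    Integrable (fun ω => ∏ k ∈ s, h k ω) μ ∧
      (∫ ω, ∏ k ∈ s, h k ω ∂μ) = ∏ k ∈ s, ∫ ω, h k ω ∂μ := by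
  classical
  induction s using Finset.induction_on with
  | empty => simp
  | insert b s hna ih =>
    have hIndep : IndepFun (fun ω => ∏ k ∈ s, h k ω) (h b) μ := by
      have := hind.indepFun_finset_prod_of_notMem hmeas hna
      convert this using 1
      ext ω
      simp
    have hPmeas : Measurable (fun ω => ∏ k ∈ s, h k ω) :=
      Finset.measurable_prod s fun k _ => hmeas k
    constructor
    · have := (hIndep.symm).integrable_mul (hint b) ih.1
      have he : (fun ω => ∏ k ∈ insert b s, h k ω) = (h b) * fun ω => ∏ k ∈ s, h k ω := by
        ext ω; simp [Finset.prod_insert hna]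
      rw [he]; exact this
    · rw [Finset.prod_insert hna, ← ih.2]
      have := aux_integral_mul_indep hIndep.symm (hmeas b).aemeasurable hPmeas.aemeasurable
      rw [← this]
      simp_rw [Finset.prod_insert hna]

end Aux

set_option maxHeartbeats 2000000 in
/-- second-moment identity for the quadratic form `a* X a` with i.i.d.
entries, and the resulting lower bound when `γ > 1`. -/
theorem statement16 {Ω : Type*} [MeasurableSpace Ω] (μ : Measure Ω) [IsProbabilityMeasure μ]
    {d : ℕ} (γ : ℝ) (ξ : Ω → ℂ) (a : Ω → EuclideanSpace ℂ (Fin d))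
    (hmeas : Measurable ξ)
    (hint4 : Integrable (fun ω => ‖ξ ω‖ ^ 4) μ)
    (hmean : ∫ ω, ξ ω ∂μ = 0)
    (hsq : ∫ ω, ξ ω ^ 2 ∂μ = 0)
    (habs2 : ∫ ω, ‖ξ ω‖ ^ 2 ∂μ = 1)
    (habs4 : ∫ ω, ‖ξ ω‖ ^ 4 ∂μ = γ)
    (ha : IIDEntriesVec μ a ξ) :
    ∀ X : Matrix (Fin d) (Fin d) ℂ, X.IsHermitian →
      (∫ ω, ‖quadForm (a ω) X‖ ^ 2 ∂μ =
          frobNorm X ^ 2 + (∑ i, (X i i).re) ^ 2 +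
            (γ - 2) * ∑ i, ‖X i i‖ ^ 2) ∧
        (1 < γ →
          min 1 (γ - 1) * frobNorm X ^ 2 ≤ ∫ ω, ‖quadForm (a ω) X‖ ^ 2 ∂μ) := by
  classical
  intro X hX
  obtain ⟨hfmeas, hfind, hfmap⟩ := ha
  -- moments of ξ
  set mom : ℕ → ℕ → ℂ := fun A B => ∫ ω, (starRingEnd ℂ) (ξ ω) ^ A * ξ ω ^ B ∂μ with hmom
  have mom00 : mom 0 0 = 1 := by simp [hmom]
  have mom01 : mom 0 1 = 0 := by simpa [hmom] using hmean
  have mom10 : mom 1 0 = 0 := by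
    have h1 : mom 1 0 = (starRingEnd ℂ) (∫ ω, ξ ω ∂μ) := by
      rw [← integral_conj]; simp [hmom]
    rw [h1, hmean]; simp
  have mom02 : mom 0 2 = 0 := by simpa [hmom] using hsq
  have mom20 : mom 2 0 = 0 := by
    have h1 : mom 2 0 = (starRingEnd ℂ) (∫ ω, ξ ω ^ 2 ∂μ) := by
      rw [← integral_conj]; simp [hmom, map_pow]
    rw [h1, hsq]; simp
  have hint2 : Integrable (fun ω => ‖ξ ω‖ ^ 2) μ := by
    refine (Integrable.add (integrable_const 1) hint4).mono'
      ((hmeas.norm.pow_const 2).aestronglyMeasurable) (ae_of_all _ fun ω => ?_)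
    have hnn : (0:ℝ) ≤ ‖ξ ω‖ := norm_nonneg _
    simp only [Pi.add_apply]
    rw [Real.norm_eq_abs, _root_.abs_of_nonneg (by positivity)]
    rcases le_total (‖ξ ω‖) 1 with h | h
    · nlinarith [pow_nonneg hnn 4]
    · nlinarith [pow_nonneg hnn 2, sq_nonneg (‖ξ ω‖ ^ 2 - 1)]
  have mom11 : mom 1 1 = 1 := by
    have e : ∀ z : ℂ, (starRingEnd ℂ) z ^ 1 * z ^ 1 = ((‖z‖ ^ 2 : ℝ) : ℂ) := by
      intro z
      rw [pow_one, pow_one, mul_comm, Complex.mul_conj, Complex.normSq_eq_norm_sq]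
    simp only [hmom, e]
    rw [show (∫ ω, ((‖ξ ω‖ ^ 2 : ℝ) : ℂ) ∂μ) = ((∫ ω, ‖ξ ω‖ ^ 2 ∂μ : ℝ) : ℂ) by
        simpa using (ContinuousLinearMap.integral_comp_comm Complex.ofRealCLM hint2),
      habs2, Complex.ofReal_one]
  have mom22 : mom 2 2 = (γ : ℂ) := by
    have e : ∀ z : ℂ, (starRingEnd ℂ) z ^ 2 * z ^ 2 = ((‖z‖ ^ 4 : ℝ) : ℂ) := by
      intro z
      have h1 : (starRingEnd ℂ) z ^ 2 * z ^ 2 = (z * (starRingEnd ℂ) z) ^ 2 := by ring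
      rw [h1, Complex.mul_conj, Complex.normSq_eq_norm_sq]
      push_cast; ring
    simp only [hmom, e]
    rw [show (∫ ω, ((‖ξ ω‖ ^ 4 : ℝ) : ℂ) ∂μ) = ((∫ ω, ‖ξ ω‖ ^ 4 ∂μ : ℝ) : ℂ) by
        simpa using (ContinuousLinearMap.integral_comp_comm Complex.ofRealCLM hint4),
      habs4]
  -- transfer of moments to entries
  have momf : ∀ (k : Fin d) (φ : ℂ → ℂ), Measurable φ →
      ∫ ω, φ (a ω k) ∂μ = ∫ ω, φ (ξ ω) ∂μ := by
    intro k φ hφ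
    rw [← integral_map (hfmeas k).aemeasurable hφ.aestronglyMeasurable, hfmap k,
      integral_map hmeas.aemeasurable hφ.aestronglyMeasurable]
  have intf : ∀ k : Fin d, Integrable (fun ω => ‖a ω k‖ ^ 4) μ := by
    intro k
    have hφm : Measurable fun z : ℂ => ‖z‖ ^ 4 :=
      (continuous_norm.measurable).pow_const 4
    have h1 : Integrable (fun z : ℂ => ‖z‖ ^ 4) (μ.map ξ) :=
      (integrable_map_measure hφm.aestronglyMeasurable hmeas.aemeasurable).mpr hint4
    rw [← hfmap k] at h1
    exact (integrable_map_measure hφm.aestronglyMeasurable (hfmeas k).aemeasurable).mp h1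
  have hmono : ∀ (k : Fin d) (A B : ℕ), A + B ≤ 4 →
      Integrable (fun ω => (starRingEnd ℂ) (a ω k) ^ A * a ω k ^ B) μ := by
    intro k A B hAB
    have hm : Measurable fun ω => (starRingEnd ℂ) (a ω k) ^ A * a ω k ^ B :=
      (((Complex.continuous_conj.measurable.comp (hfmeas k))).pow_const A).mul ((hfmeas k).pow_const B)
    refine (Integrable.add (integrable_const 1) (intf k)).mono' hm.aestronglyMeasurable
      (ae_of_all _ fun ω => ?_)
    have hnn : (0:ℝ) ≤ ‖a ω k‖ := norm_nonneg _
    have hnorm : ‖(starRingEnd ℂ) (a ω k) ^ A * a ω k ^ B‖ = ‖a ω k‖ ^ (A + B) := by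
      simp [map_mul, map_pow, Complex.norm_conj, pow_add]
    simp only [Pi.add_apply]
    rw [hnorm]
    rcases le_total (‖a ω k‖) 1 with h | h
    · have h1 : ‖a ω k‖ ^ (A + B) ≤ 1 := pow_le_one₀ hnn h
      nlinarith [pow_nonneg hnn 4]
    · have h1 : ‖a ω k‖ ^ (A + B) ≤ ‖a ω k‖ ^ 4 :=
        pow_le_pow_right₀ h hAB
      linarith
  -- the key fourth-moment computation
  have key : ∀ i l p q : Fin d,
      Integrable (fun ω => (starRingEnd ℂ) (a ω i) * a ω l *
        (a ω p * (starRingEnd ℂ) (a ω q))) μ ∧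
      (∫ ω, (starRingEnd ℂ) (a ω i) * a ω l * (a ω p * (starRingEnd ℂ) (a ω q)) ∂μ) =
        (if i = l then 1 else 0) * (if p = q then 1 else 0) +
        (if i = p then 1 else 0) * (if l = q then 1 else 0) +
        (if i = l ∧ p = q ∧ i = p then ((γ:ℂ) - 2) else 0) := by
    intro i l p q
    set A : Fin d → ℕ := fun k => (if i = k then 1 else 0) + (if q = k then 1 else 0) with hA
    set B : Fin d → ℕ := fun k => (if l = k then 1 else 0) + (if p = k then 1 else 0) with hB
    set h : Fin d → Ω → ℂ := fun k ω => (starRingEnd ℂ) (a ω k) ^ A k * a ω k ^ B k with hh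
    have hhmeas : ∀ k, Measurable (h k) := fun k =>
      (((Complex.continuous_conj.measurable.comp (hfmeas k))).pow_const _).mul ((hfmeas k).pow_const _)
    have hhint : ∀ k, Integrable (h k) μ := fun k =>
      hmono k (A k) (B k) (by simp only [hA, hB]; split_ifs <;> norm_num)
    have hhind : iIndepFun h μ :=
      hfind.comp (fun k z => (starRingEnd ℂ) z ^ A k * z ^ B k)
        (fun k => (Complex.continuous_conj.measurable.pow_const _).mul (measurable_id.pow_const _))
    have base : ∀ (x : Fin d) (z : Fin d → ℂ),
        (∏ k, z k ^ (if x = k then 1 else 0)) = z x := by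
      intro x z
      rw [Finset.prod_congr rfl
        (fun k _ => (by split <;> simp : z k ^ (if x = k then 1 else 0) = if x = k then z k else 1)),
        Finset.prod_ite_eq]
      simp
    have repr : ∀ ω, (starRingEnd ℂ) (a ω i) * a ω l * (a ω p * (starRingEnd ℂ) (a ω q)) =
        ∏ k, h k ω := by
      intro ω
      simp only [hh, hA, hB, pow_add]
      simp only [Finset.prod_mul_distrib]
      rw [base i (fun k => (starRingEnd ℂ) (a ω k)), base q (fun k => (starRingEnd ℂ) (a ω k)),
        base l (fun k => a ω k), base p (fun k => a ω k)]
      ring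
    have hmomk : ∀ k, (∫ ω, h k ω ∂μ) = mom (A k) (B k) := by
      intro k
      exact momf k (fun z => (starRingEnd ℂ) z ^ A k * z ^ B k)
        ((Complex.continuous_conj.measurable.pow_const _).mul (measurable_id.pow_const _))
    constructor
    · exact ((aux_indep_prod hhind hhmeas hhint Finset.univ).1).congr
        (ae_of_all _ fun ω => (repr ω).symm)
    · rw [show (fun ω => (starRingEnd ℂ) (a ω i) * a ω l * (a ω p * (starRingEnd ℂ) (a ω q)))
          = fun ω => ∏ k, h k ω from funext repr]
      rw [(aux_indep_prod hhind hhmeas hhint Finset.univ).2,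
        Finset.prod_congr rfl fun k _ => hmomk k]
      by_cases hil : i = l
      · subst hil
        by_cases hpq : p = q
        · subst hpq
          by_cases hip : i = p
          · subst hip
            have hv : ∀ k, mom (A k) (B k) = if i = k then (γ:ℂ) else 1 := by
              intro k
              by_cases hk : i = k <;> simp [hA, hB, hk, mom22, mom00]
            rw [Finset.prod_congr rfl fun k _ => hv k, Finset.prod_ite_eq]
            simp only [Finset.mem_univ, if_true, if_pos rfl, and_self]
            ring
          · have hv : ∀ k, mom (A k) (B k) = 1 := by
              intro k
              by_cases h1 : i = k
              · have h2 : ¬ p = k := fun hc => hip (h1.trans hc.symm)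
                simp [hA, hB, h1, h2, mom11]
              · by_cases h2 : p = k <;> simp [hA, hB, h1, h2, mom11, mom00]
            rw [Finset.prod_congr rfl fun k _ => hv k, Finset.prod_const_one]
            simp [hip]
        · by_cases hip : i = p
          · subst hip
            have hiq : ¬ i = q := hpq
            rw [Finset.prod_eq_zero (Finset.mem_univ q)
              (by simp [hA, hB, hiq, mom10] : mom (A q) (B q) = 0)]
            simp [hpq, hiq]
          · have hqp : ¬ q = p := fun hc => hpq hc.symm
            have hip' : ¬ i = p := hip
            rw [Finset.prod_eq_zero (Finset.mem_univ p)
              (by simp [hA, hB, hip', hqp, mom01] : mom (A p) (B p) = 0)]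
            simp [hpq, hip]
      · by_cases hip : i = p
        · subst hip
          by_cases hlq : l = q
          · subst hlq
            have hv : ∀ k, mom (A k) (B k) = 1 := by
              intro k
              by_cases h1 : i = k
              · have h2 : ¬ l = k := fun hc => hil (h1.trans hc.symm)
                simp [hA, hB, h1, h2, mom11]
              · by_cases h2 : l = k <;> simp [hA, hB, h1, h2, mom11, mom00]
            rw [Finset.prod_congr rfl fun k _ => hv k, Finset.prod_const_one]
            simp [hil]
          · by_cases hiq : i = q
            · have hql : ¬ q = l := fun hc => hil (hiq.trans hc)
              have hil' : ¬ i = l := hil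
              rw [Finset.prod_eq_zero (Finset.mem_univ l)
                (by simp [hA, hB, hil', hql, mom01] : mom (A l) (B l) = 0)]
              simp [hil, hlq]
            · have hiq' : ¬ i = q := hiq
              have hlq' : ¬ l = q := hlq
              rw [Finset.prod_eq_zero (Finset.mem_univ q)
                (by simp [hA, hB, hiq', hlq', mom10] : mom (A q) (B q) = 0)]
              simp [hil, hlq]
        · by_cases hiq : i = q
          · subst hiq
            have hli : ¬ l = i := fun hc => hil hc.symm
            have hpi : ¬ p = i := fun hc => hip hc.symm
            rw [Finset.prod_eq_zero (Finset.mem_univ i)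
              (by simp [hA, hB, hli, hpi, mom20] : mom (A i) (B i) = 0)]
            simp [hil, hip]
          · have hli : ¬ l = i := fun hc => hil hc.symm
            have hpi : ¬ p = i := fun hc => hip hc.symm
            have hqi : ¬ q = i := fun hc => hiq hc.symm
            rw [Finset.prod_eq_zero (Finset.mem_univ i)
              (by simp [hA, hB, hli, hpi, hqi, mom10] : mom (A i) (B i) = 0)]
            simp [hil, hip]

  -- expansion of |quadForm|^2 as a quadruple sum
  have hexp : ∀ ω : Ω, quadForm (a ω) X * (starRingEnd ℂ) (quadForm (a ω) X) =
      ∑ x : Fin d × Fin d, ∑ y : Fin d × Fin d,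
        (X x.1 x.2 * (starRingEnd ℂ) (X y.1 y.2)) *
          ((starRingEnd ℂ) (a ω x.1) * a ω x.2 * (a ω y.1 * (starRingEnd ℂ) (a ω y.2))) := by
    intro ω
    have hq : quadForm (a ω) X =
        ∑ x : Fin d × Fin d, (starRingEnd ℂ) (a ω x.1) * (X x.1 x.2 * a ω x.2) := by
      rw [quadForm, dotProduct, Fintype.sum_prod_type]
      refine Finset.sum_congr rfl fun i _ => ?_
      simp [Matrix.mulVec, dotProduct, Finset.mul_sum]
    rw [hq, map_sum, Finset.sum_mul_sum]
    refine Finset.sum_congr rfl fun x _ => Finset.sum_congr rfl fun y _ => ?_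
    simp only [map_mul, Complex.conj_conj]
    ring
  have hcore : (∫ ω, quadForm (a ω) X * (starRingEnd ℂ) (quadForm (a ω) X) ∂μ) =
      (∑ i, X i i) * (∑ i, (starRingEnd ℂ) (X i i)) +
      (∑ i, ∑ l, X i l * (starRingEnd ℂ) (X i l)) +
      ((γ:ℂ) - 2) * ∑ i, X i i * (starRingEnd ℂ) (X i i) := by
    simp only [hexp]
    rw [integral_finset_sum _ fun x _ =>
      integrable_finset_sum _ fun y _ => ((key x.1 x.2 y.1 y.2).1.const_mul _)]
    rw [Finset.sum_congr rfl fun x (_ : x ∈ Finset.univ) =>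
      integral_finset_sum _ fun y _ => ((key x.1 x.2 y.1 y.2).1.const_mul _)]
    rw [Finset.sum_congr rfl fun x (_ : x ∈ Finset.univ) =>
      Finset.sum_congr rfl fun y (_ : y ∈ Finset.univ) => by
        rw [integral_const_mul, (key x.1 x.2 y.1 y.2).2]]
    simp only [Fintype.sum_prod_type]
    simp only [mul_add, Finset.sum_add_distrib, ite_and, mul_ite, mul_one, mul_zero, ite_mul,
      zero_mul, one_mul, Finset.sum_ite_irrel, Finset.sum_ite_eq, Finset.sum_ite_eq',
      Finset.mem_univ, if_true, Finset.sum_const_zero]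
    rw [Finset.sum_mul_sum, Finset.mul_sum]
    congr 1
    exact Finset.sum_congr rfl fun i _ => by ring
  -- pass to real parts
  have him : ∀ i : Fin d, (X i i).im = 0 := by
    intro i
    have h0 := congrFun (congrFun hX i) i
    rw [Matrix.conjTranspose_apply] at h0
    exact Complex.conj_eq_iff_im.mp h0
  have hfrob : frobNorm X ^ 2 = ∑ i, ∑ j, ‖X i j‖ ^ 2 := by
    rw [frobNorm, Real.sq_sqrt]
    positivity
  have heq : ∫ ω, ‖quadForm (a ω) X‖ ^ 2 ∂μ =
      frobNorm X ^ 2 + (∑ i, (X i i).re) ^ 2 + (γ - 2) * ∑ i, ‖X i i‖ ^ 2 := by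
    have hof : ((∫ ω, ‖quadForm (a ω) X‖ ^ 2 ∂μ : ℝ) : ℂ) =
        ∫ ω, quadForm (a ω) X * (starRingEnd ℂ) (quadForm (a ω) X) ∂μ := by
      rw [show (fun ω => quadForm (a ω) X * (starRingEnd ℂ) (quadForm (a ω) X)) =
          fun ω => ((‖quadForm (a ω) X‖ ^ 2 : ℝ) : ℂ) from funext fun ω => by
            rw [Complex.mul_conj, Complex.normSq_eq_norm_sq]]
      exact integral_ofReal.symm
    have e1 : (∑ i, X i i) * (∑ i, (starRingEnd ℂ) (X i i)) =
        (((∑ i, (X i i).re) ^ 2 : ℝ) : ℂ) := by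
      rw [← map_sum, Complex.mul_conj]
      norm_cast
      rw [Complex.normSq_apply, Complex.re_sum, Complex.im_sum]
      simp only [him, Finset.sum_const_zero]
      ring
    have e2 : (∑ i, ∑ l, X i l * (starRingEnd ℂ) (X i l)) = ((frobNorm X ^ 2 : ℝ) : ℂ) := by
      rw [hfrob]
      push_cast
      refine Finset.sum_congr rfl fun i _ => Finset.sum_congr rfl fun l _ => ?_
      rw [Complex.mul_conj, Complex.normSq_eq_norm_sq]
      norm_cast
    have e3 : (∑ i, X i i * (starRingEnd ℂ) (X i i)) =
        ((∑ i, ‖X i i‖ ^ 2 : ℝ) : ℂ) := by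
      push_cast
      refine Finset.sum_congr rfl fun i _ => ?_
      rw [Complex.mul_conj, Complex.normSq_eq_norm_sq]
      norm_cast
    have hofval : ((∫ ω, ‖quadForm (a ω) X‖ ^ 2 ∂μ : ℝ) : ℂ) =
        (((∑ i, (X i i).re) ^ 2 : ℝ) : ℂ) + ((frobNorm X ^ 2 : ℝ) : ℂ) +
          ((γ:ℂ) - 2) * ((∑ i, ‖X i i‖ ^ 2 : ℝ) : ℂ) := by
      rw [hof, hcore, e1, e2, e3]
    have hfin : ((∫ ω, ‖quadForm (a ω) X‖ ^ 2 ∂μ : ℝ) : ℂ) =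
        ((frobNorm X ^ 2 + (∑ i, (X i i).re) ^ 2 +
          (γ - 2) * ∑ i, ‖X i i‖ ^ 2 : ℝ) : ℂ) := by
      rw [hofval]; push_cast; ring
    exact_mod_cast hfin
  refine ⟨heq, fun hγ => ?_⟩
  rw [heq]
  have hdle : (∑ i, ‖X i i‖ ^ 2) ≤ frobNorm X ^ 2 := by
    rw [hfrob]
    exact Finset.sum_le_sum fun i _ =>
      Finset.single_le_sum (fun j _ => sq_nonneg (‖X i j‖)) (Finset.mem_univ i)
  have hfnn : 0 ≤ frobNorm X ^ 2 := by
    rw [hfrob]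
    exact Finset.sum_nonneg fun i _ => Finset.sum_nonneg fun j _ => sq_nonneg _
  have hdnn : 0 ≤ ∑ i, ‖X i i‖ ^ 2 :=
    Finset.sum_nonneg fun i _ => sq_nonneg _
  have htnn : 0 ≤ (∑ i, (X i i).re) ^ 2 := sq_nonneg _
  rcases le_total γ 2 with h2 | h2
  · have hm : min 1 (γ - 1) ≤ γ - 1 := min_le_right _ _
    nlinarith [mul_le_mul_of_nonneg_right hm hfnn,
      mul_le_mul_of_nonneg_left hdle (by linarith : (0:ℝ) ≤ 2 - γ)]
  · have hm : min 1 (γ - 1) ≤ 1 := min_le_left _ _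
    nlinarith [mul_le_mul_of_nonneg_right hm hfnn,
      mul_nonneg (by linarith : (0:ℝ) ≤ γ - 2) hdnn]
end

section
/- Let d ≥ 2, let a_j ∈ ℂ^d, j = 1,…,m, be i.i.d. complex sub-Gaussian random vectors whose entries are i.i.d. copies of ξ, let x₀ = (1, 0, …, 0) ∈ ℂ^d, η = (1, …, 1) ∈ ℝ^m, b_j = |⟨a_j, x₀⟩| + 1, and ε = √(8m). Then with probability at least 1/2 one has Σ_{j=1}^m b_j² ≤ ε², so that x̂ = 0 is a minimizer of the constrained ℓ₁ model (minimize ‖x‖₁ over x ∈ ℂ^d subject to (Σ_{j=1}^m (|⟨a_j, x⟩| − b_j)²)^{1/2} ≤ ε); consequently, with probability at least 1/2 there is a minimizer x̂ of this model with min over θ ∈ [0, 2π) of ‖x̂ − exp(iθ)·x₀‖₂ = 1 ≥ ε/(√8·√m). -/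
open MeasureTheory ProbabilityTheory Complex Finset
open scoped Real ComplexInnerProductSpace

/-- sharpness example for the constrained ℓ₁ model: with `x₀ = e₁`,
`η ≡ 1` and `ε = √(8m)`, with probability at least `1/2` the zero vector is a
minimizer, so some minimizer is at unit distance from the phase orbit of `x₀`. -/
theorem statement19 (Cψ γ : ℝ) (hCψ : 0 < Cψ) (hγ : 1 < γ)
    (d m : ℕ) (hd : 2 ≤ d)
    (Ω : Type) [MeasurableSpace Ω] (μ : Measure Ω) [IsProbabilityMeasure μ]
    (ξ : Ω → ℂ) (a : Fin m → Ω → EuclideanSpace ℂ (Fin d))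
    (hξ : StdSubgaussian μ ξ Cψ γ)
    (ha : IIDEntries μ a ξ)
    (x₀ : EuclideanSpace ℂ (Fin d)) (hx₀ : x₀ = EuclideanSpace.single ⟨0, by omega⟩ (1:ℂ))
    (ε : ℝ) (hε : ε = Real.sqrt (8 * m)) :
    ENNReal.ofReal (1 / 2) ≤
      μ {ω | (∑ j, (‖⟪a j ω, x₀⟫‖ + 1) ^ 2 ≤ ε ^ 2) ∧
             IsL1Minimizer (fun j => a j ω) (fun j => ‖⟪a j ω, x₀⟫‖ + 1) ε 0 ∧
             ∃ xhat : EuclideanSpace ℂ (Fin d),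
               IsL1Minimizer (fun j => a j ω) (fun j => ‖⟪a j ω, x₀⟫‖ + 1) ε xhat ∧
               (∀ θ ∈ Set.Ico (0:ℝ) (2 * π),
                 ‖xhat - Complex.exp (θ * Complex.I) • x₀‖ = 1) ∧
               ε / (Real.sqrt 8 * Real.sqrt m) ≤ 1} := by
  classical
  set i0 : Fin d := ⟨0, by omega⟩ with hi0
  -- the entrywise functions
  set f : Fin m → Ω → ℝ := fun j ω => ‖a j ω i0‖ ^ 2 with hf
  have hmeasf : ∀ j, Measurable (f j) := fun j =>
    ((continuous_norm.measurable.comp (ha.1 j i0)).pow_const 2)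
  -- integrability and integral of |ξ|²
  have hg_cont : Continuous (fun z : ℂ => ‖z‖ ^ 2) :=
    (continuous_norm).pow 2
  have hξint : Integrable (fun ω => ‖ξ ω‖ ^ 2) μ := by
    have h := (hξ.psi2 2 (by norm_num)).1
    have : (fun ω => ‖ξ ω‖ ^ (2:ℝ)) = fun ω => ‖ξ ω‖ ^ 2 := by
      funext ω
      rw [show ((2:ℝ)) = ((2:ℕ):ℝ) by norm_num, Real.rpow_natCast]
    rwa [this] at h
  have hmapint : Integrable (fun z : ℂ => ‖z‖ ^ 2) (Measure.map ξ μ) := by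
    rw [integrable_map_measure hg_cont.aestronglyMeasurable hξ.meas.aemeasurable]
    exact hξint
  have hintf : ∀ j, Integrable (f j) μ := by
    intro j
    have h1 : Integrable (fun z : ℂ => ‖z‖ ^ 2)
        (Measure.map (fun ω => a j ω i0) μ) := by rw [ha.2.2 j i0]; exact hmapint
    rw [integrable_map_measure hg_cont.aestronglyMeasurable
      (ha.1 j i0).aemeasurable] at h1
    exact h1
  have hIf : ∀ j, ∫ ω, f j ω ∂μ = 1 := by
    intro j
    have h1 : ∫ ω, f j ω ∂μ
        = ∫ z, ‖z‖ ^ 2 ∂(Measure.map (fun ω => a j ω i0) μ) := by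
      rw [integral_map (ha.1 j i0).aemeasurable hg_cont.aestronglyMeasurable]
    have h2 : ∫ z, ‖z‖ ^ 2 ∂(Measure.map ξ μ)
        = ∫ ω, ‖ξ ω‖ ^ 2 ∂μ := by
      rw [integral_map hξ.meas.aemeasurable hg_cont.aestronglyMeasurable]
    rw [h1, ha.2.2 j i0, h2, hξ.absSq_one]
  -- the sum function
  set g : Ω → ℝ := fun ω => ∑ j, f j ω with hg
  have hintg : Integrable g μ := integrable_finset_sum _ (fun j _ => hintf j)
  have hIg : ∫ ω, g ω ∂μ = m := by
    rw [hg]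
    rw [integral_finset_sum _ (fun j _ => hintf j)]
    simp [hIf]
  have hg_nonneg : ∀ ω, 0 ≤ g ω := fun ω =>
    Finset.sum_nonneg fun j _ => sq_nonneg _
  -- the good event
  set S : Set Ω := {ω | g ω ≤ 3 * m} with hS
  have hSmeas : MeasurableSet S :=
    measurableSet_le (Finset.measurable_sum _ fun j _ => hmeasf j) measurable_const
  -- probability bound
  have hprob : ENNReal.ofReal (1 / 2) ≤ μ S := by
    rcases Nat.eq_zero_or_pos m with hm | hm
    · have : S = Set.univ := by
        ext ω; simp [hS, hg, hm, Finset.univ_eq_empty, hg_nonneg]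
        subst hm
        simp [hg, Finset.univ_eq_empty]
      rw [this, measure_univ]
      exact le_of_le_of_eq (ENNReal.ofReal_le_one.mpr (by norm_num)) rfl |>.trans_eq rfl
    · have hm3 : (0:ℝ) < 3 * m := by positivity
      have hmarkov := mul_meas_ge_le_integral_of_nonneg
        (Filter.Eventually.of_forall hg_nonneg) hintg (3 * m)
      rw [hIg] at hmarkov
      have hne : μ {ω | 3 * (m:ℝ) ≤ g ω} ≠ ⊤ := measure_ne_top μ _
      have htoReal : (μ {ω | 3 * (m:ℝ) ≤ g ω}).toReal ≤ 1 / 3 := by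
        rw [le_div_iff₀ (by norm_num)]
        rw [measureReal_def] at hmarkov
        nlinarith [hmarkov]
      have hle : μ {ω | 3 * (m:ℝ) ≤ g ω} ≤ ENNReal.ofReal (1 / 3) := by
        rw [← ENNReal.ofReal_toReal hne]
        exact ENNReal.ofReal_le_ofReal htoReal
      have hcompl : μ {ω | g ω < 3 * m} + μ {ω | 3 * (m:ℝ) ≤ g ω} = 1 := by
        have hmeas' : MeasurableSet {ω | 3 * (m:ℝ) ≤ g ω} :=
          measurableSet_le measurable_const (Finset.measurable_sum _ fun j _ => hmeasf j)
        have : {ω | g ω < 3 * m} = {ω | 3 * (m:ℝ) ≤ g ω}ᶜ := by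
          ext ω; simp [not_le]
        rw [this, measure_compl hmeas' (measure_ne_top μ _), measure_univ]
        exact tsub_add_cancel_of_le (prob_le_one)
      have hsub : μ {ω | g ω < 3 * m} ≤ μ S :=
        measure_mono (Set.setOf_subset_setOf.mpr fun ω hω => hω.le)
      have h1 : (1:ENNReal) ≤ μ S + ENNReal.ofReal (1 / 3) := by
        calc (1:ENNReal) = μ {ω | g ω < 3 * m} + μ {ω | 3 * (m:ℝ) ≤ g ω} := hcompl.symm
        _ ≤ μ S + ENNReal.ofReal (1 / 3) := add_le_add hsub hle
      have h2 : ENNReal.ofReal (1 / 2) + ENNReal.ofReal (1 / 3) ≤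
          μ S + ENNReal.ofReal (1 / 3) := by
        refine le_trans ?_ h1
        rw [← ENNReal.ofReal_add (by norm_num) (by norm_num)]
        exact ENNReal.ofReal_le_one.mpr (by norm_num)
      exact (ENNReal.add_le_add_iff_right (by simp)).mp h2
  refine le_trans hprob (measure_mono ?_)
  -- deterministic part
  intro ω hω
  simp only [hS, Set.mem_setOf_eq] at hω
  -- |⟨a j ω, x₀⟩| = |a j ω i0|
  have hkey : ∀ j, ‖⟪a j ω, x₀⟫‖ = ‖a j ω i0‖ := by
    intro j
    rw [hx₀]
    rw [show ⟪a j ω, EuclideanSpace.single i0 (1:ℂ)⟫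
        = (starRingEnd ℂ) (a j ω i0) from ?_]
    · exact Complex.norm_conj _
    · rw [PiLp.inner_apply]
      simp [EuclideanSpace.single_apply, RCLike.inner_apply]
  have hεsq : ε ^ 2 = 8 * m := by
    rw [hε, Real.sq_sqrt (by positivity)]
  have hε0 : 0 ≤ ε := by rw [hε]; positivity
  -- main bound: ∑ (|⟨a j ω, x₀⟩| + 1)² ≤ ε²
  have hsum : ∑ j, (‖⟪a j ω, x₀⟫‖ + 1) ^ 2 ≤ ε ^ 2 := by
    rw [hεsq]
    calc ∑ j, (‖⟪a j ω, x₀⟫‖ + 1) ^ 2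
        ≤ ∑ j, (2 * ‖a j ω i0‖ ^ 2 + 2) := by
          refine Finset.sum_le_sum fun j _ => ?_
          rw [hkey j]
          nlinarith [sq_nonneg (‖a j ω i0‖ - 1)]
      _ = 2 * g ω + 2 * m := by
          rw [Finset.sum_add_distrib, ← Finset.mul_sum]
          simp [hg, hf, mul_comm]
      _ ≤ 2 * (3 * m) + 2 * m := by linarith
      _ = 8 * m := by ring
  -- zero is a minimizer
  have hloss0 : ampLoss (fun j => a j ω) (fun j => ‖⟪a j ω, x₀⟫‖ + 1)
      (0 : EuclideanSpace ℂ (Fin d))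
      = ∑ j, (‖⟪a j ω, x₀⟫‖ + 1) ^ 2 := by
    unfold ampLoss
    refine Finset.sum_congr rfl fun j _ => ?_
    rw [inner_zero_right]
    simp only [norm_zero]; ring
  have hmin0 : IsL1Minimizer (fun j => a j ω)
      (fun j => ‖⟪a j ω, x₀⟫‖ + 1) ε 0 := by
    constructor
    · rw [hloss0]
      calc Real.sqrt (∑ j, (‖⟪a j ω, x₀⟫‖ + 1) ^ 2)
          ≤ Real.sqrt (ε ^ 2) := Real.sqrt_le_sqrt hsum
        _ = ε := Real.sqrt_sq hε0
    · intro x _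
      have : ∑ l, ‖(0 : EuclideanSpace ℂ (Fin d)) l‖ = 0 := by simp
      rw [this]
      exact Finset.sum_nonneg fun l _ => norm_nonneg _
  refine ⟨hsum, hmin0, 0, hmin0, ?_, ?_⟩
  · intro θ _
    rw [hx₀]
    rw [zero_sub, norm_neg, norm_smul, EuclideanSpace.norm_single]
    simp [Complex.norm_exp]
  · rw [hε, show (8 : ℝ) * m = 8 * m from rfl, Real.sqrt_mul (by norm_num)]
    rcases eq_or_ne (Real.sqrt 8 * Real.sqrt m) 0 with h | h
    · rw [h, div_zero]; norm_num
    · rw [div_self h]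
end
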